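/- The adjacency matrix of the friendship graph F_N on 2N+1 vertices has eigenvalues (1+√(1+8N))/2 and (1-√(1+8N))/2 each with multiplicity 1, eigenvalue -1 with multiplicity N, and eigenvalue 1 with multiplicity N-1. -/

import Mathlib

open Matrix

/-- The adjacency matrix of the friendship graph `F_N` on `2N+1` vertices
`{0,1,…,2N}`: vertex `0` is adjacent to every other vertex, and the only other
edges are `{2i-1, 2i}` for `1 ≤ i ≤ N`. -/
def friendshipAdj (N : ℕ) : Matrix (Fin (2 * N + 1)) (Fin (2 * N + 1)) ℂ :=
  Matrix.of fun i j =>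
    if (i = 0 ∧ j ≠ 0) ∨ (j = 0 ∧ i ≠ 0)
        ∨ ((i : ℕ) % 2 = 1 ∧ (j : ℕ) = (i : ℕ) + 1)
        ∨ ((j : ℕ) % 2 = 1 ∧ (i : ℕ) = (j : ℕ) + 1)
      then 1 else 0

namespace FriendAux

set_option linter.unreachableTactic false
set_option linter.unusedTactic false

def toIdx (N : ℕ) : Unit ⊕ (Fin 2 × Fin N) → Fin (2 * N + 1)
  | .inl _ => ⟨0, by omega⟩
  | .inr (r, q) => ⟨2 * q.1 + 1 + r.1, by have := q.2; have := r.2; omega⟩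

def idxEquiv (N : ℕ) : (Unit ⊕ (Fin 2 × Fin N)) ≃ Fin (2 * N + 1) where
  toFun := toIdx N
  invFun i := if h : i.1 = 0 then .inl () else
    .inr (⟨(i.1 - 1) % 2, by omega⟩, ⟨(i.1 - 1) / 2, by have := i.2; omega⟩)
  left_inv := by
    rintro (⟨⟩ | ⟨r, q⟩)
    · simp [toIdx]
    · have hr := r.2; have hq := q.2
      simp only [toIdx]
      refine (dif_neg (show ¬(2 * q.1 + 1 + r.1 = 0) by omega)).trans ?_
      have h1 : (2 * q.1 + 1 + r.1 - 1) % 2 = r.1 := by omega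
      have h2 : (2 * q.1 + 1 + r.1 - 1) / 2 = q.1 := by omega
      simp only [Sum.inr.injEq, Prod.mk.injEq]
      exact ⟨Fin.ext h1, Fin.ext h2⟩
  right_inv := by
    intro i
    by_cases h : i.1 = 0
    · simp only [dif_pos h]; exact Fin.ext (by simp [toIdx, h])
    · simp only [dif_neg h]; exact Fin.ext (by simp only [toIdx]; omega)

lemma two_apply (x : ℂ) (r r' : Fin 2) :
    ![![x, -1], ![-1, x]] r r' = if (r : ℕ) = (r' : ℕ) then x else -1 := by
  fin_cases r <;> fin_cases r' <;> simp

lemma submatrix_eq (N : ℕ) (x : ℂ) :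
    (x • (1 : Matrix (Fin (2 * N + 1)) (Fin (2 * N + 1)) ℂ)
        - friendshipAdj N).submatrix (toIdx N) (toIdx N)
      = fromBlocks (Matrix.of fun _ _ => x) (Matrix.of fun _ _ => (-1 : ℂ))
          (Matrix.of fun _ _ => (-1 : ℂ))
          (blockDiagonal fun _ : Fin N => !![x, -1; -1, x]) := by
  ext i j
  rcases i with _ | ⟨r, q⟩ <;> rcases j with _ | ⟨r', q'⟩ <;>
    simp only [submatrix_apply, Matrix.sub_apply, Matrix.smul_apply, one_apply, friendshipAdj, toIdx,
      fromBlocks_apply₁₁, fromBlocks_apply₁₂, fromBlocks_apply₂₁, fromBlocks_apply₂₂,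
      of_apply, smul_eq_mul, blockDiagonal_apply, two_apply, ne_eq, Fin.ext_iff, Fin.val_zero,
      not_true, not_false_iff, true_and, and_true, false_and, and_false, or_false, false_or,
      ite_true, ite_false]
  · split_ifs <;> first | ring1 | (exfalso; omega) | (exfalso; simp_all) | (exfalso; simp_all; omega)
  · have h1 := r'.2; have h2 := q'.2
    split_ifs <;> first | ring1 | (exfalso; omega) | (exfalso; simp_all) | (exfalso; simp_all; omega)
  · have h1 := r.2; have h2 := q.2
    split_ifs <;> first | ring1 | (exfalso; omega) | (exfalso; simp_all) | (exfalso; simp_all; omega)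
  · have h1 := r.2; have h2 := q.2; have h3 := r'.2; have h4 := q'.2
    split_ifs <;> first | ring1 | (exfalso; omega) | (exfalso; simp_all) | (exfalso; simp_all; omega)

lemma det_eq (N : ℕ) (hN : 1 ≤ N) (x : ℂ) (h1 : x ≠ 1) (h2 : x ≠ -1) :
    (x • (1 : Matrix (Fin (2 * N + 1)) (Fin (2 * N + 1)) ℂ) - friendshipAdj N).det
      = (x ^ 2 - x - 2 * N) * (x + 1) ^ N * (x - 1) ^ (N - 1) := by
  have h1' : x - 1 ≠ 0 := sub_ne_zero.mpr h1
  have h2' : x + 1 ≠ 0 := fun h => h2 (by linear_combination h)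
  have hx2 : x ^ 2 - 1 ≠ 0 := by
    rw [show x ^ 2 - 1 = (x - 1) * (x + 1) by ring]; exact mul_ne_zero h1' h2'
  set D : Matrix (Fin 2 × Fin N) (Fin 2 × Fin N) ℂ :=
    blockDiagonal fun _ : Fin N => !![x, -1; -1, x] with hD
  set E : Matrix (Fin 2 × Fin N) (Fin 2 × Fin N) ℂ :=
    (x ^ 2 - 1)⁻¹ • blockDiagonal fun _ : Fin N => !![x, 1; 1, x] with hE
  have hDE : D * E = 1 := by
    rw [hD, hE, Matrix.mul_smul, ← blockDiagonal_mul]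
    have : (fun k : Fin N => !![x, -1; -1, x] * !![x, 1; 1, x])
        = fun _ : Fin N => (x ^ 2 - 1) • (1 : Matrix (Fin 2) (Fin 2) ℂ) := by
      funext k
      ext i j
      fin_cases i <;> fin_cases j <;>
        simp [Matrix.mul_apply, Fin.sum_univ_two, Matrix.one_apply] <;> ring
    rw [this]
    rw [show (fun _ : Fin N => (x ^ 2 - 1) • (1 : Matrix (Fin 2) (Fin 2) ℂ))
          = (x ^ 2 - 1) • (fun _ : Fin N => (1 : Matrix (Fin 2) (Fin 2) ℂ)) from rfl,
      blockDiagonal_smul, smul_smul, inv_mul_cancel₀ hx2, one_smul]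
    exact blockDiagonal_one
  letI : Invertible D := invertibleOfRightInverse _ _ hDE
  have hinv : ⅟D = E := invOf_eq_right_inv hDE
  have hsub : (x • (1 : Matrix (Fin (2 * N + 1)) (Fin (2 * N + 1)) ℂ)
        - friendshipAdj N).submatrix ⇑(idxEquiv N) ⇑(idxEquiv N)
      = fromBlocks (Matrix.of fun _ _ => x) (Matrix.of fun _ _ => (-1 : ℂ))
          (Matrix.of fun _ _ => (-1 : ℂ)) D := submatrix_eq N x
  rw [← det_submatrix_equiv_self (idxEquiv N), hsub, det_fromBlocks₂₂, hinv]
  -- determinant of D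
  have hdetD : D.det = (x ^ 2 - 1) ^ N := by
    rw [hD, det_blockDiagonal]
    simp [Matrix.det_fin_two_of]
    ring
  -- the Schur complement entry
  have hBEC : (((Matrix.of fun _ _ => (-1:ℂ) : Matrix Unit (Fin 2 × Fin N) ℂ)
        * E * (Matrix.of fun _ _ => (-1:ℂ) : Matrix (Fin 2 × Fin N) Unit ℂ) : Matrix Unit Unit ℂ))
        PUnit.unit PUnit.unit
      = (N : ℂ) * (2 * x + 2) * (x ^ 2 - 1)⁻¹ := by
    rw [hE]
    simp only [Matrix.mul_apply, of_apply, neg_mul, one_mul, mul_neg, neg_neg, Matrix.smul_apply,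
      smul_eq_mul, blockDiagonal_apply, Fintype.sum_prod_type]
    simp only [Finset.sum_ite_eq, Finset.mem_univ, if_true, mul_ite, mul_zero]
    simp [Finset.sum_ite_eq', Fin.sum_univ_two, Finset.sum_const, Finset.card_univ,
      Fintype.card_fin, mul_comm]
    ring
  have hschur : (((Matrix.of fun _ _ => x : Matrix Unit Unit ℂ)
        - (Matrix.of fun _ _ => (-1:ℂ) : Matrix Unit (Fin 2 × Fin N) ℂ)
          * E * (Matrix.of fun _ _ => (-1:ℂ) : Matrix (Fin 2 × Fin N) Unit ℂ)) : Matrix Unit Unit ℂ).det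
      = x - (N : ℂ) * (2 * x + 2) * (x ^ 2 - 1)⁻¹ := by
    rw [det_unique, Matrix.sub_apply, of_apply, hBEC]
  rw [hdetD, hschur]
  obtain ⟨M, rfl⟩ : ∃ M, N = M + 1 := ⟨N - 1, by omega⟩
  simp only [Nat.add_sub_cancel]
  rw [show x ^ 2 - 1 = (x + 1) * (x - 1) by ring, mul_pow]
  field_simp
  ring

end FriendAux

open Polynomial in
theorem friendship_eigenvalues (N : ℕ) (hN : 1 ≤ N) (x : ℂ) :
    (x • (1 : Matrix (Fin (2 * N + 1)) (Fin (2 * N + 1)) ℂ) - friendshipAdj N).det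
      = (x - ((1 + Real.sqrt (1 + 8 * N)) / 2 : ℝ))
        * (x - ((1 - Real.sqrt (1 + 8 * N)) / 2 : ℝ))
        * (x + 1) ^ N * (x - 1) ^ (N - 1) := by
  classical
  set P : Polynomial ℂ :=
    ((X : Polynomial ℂ) • (1 : Matrix (Fin (2 * N + 1)) (Fin (2 * N + 1)) (Polynomial ℂ))
      - (friendshipAdj N).map C).det with hPdef
  set Q : Polynomial ℂ :=
    ((X : Polynomial ℂ) ^ 2 - X - C (2 * (N : ℂ))) * (X + 1) ^ N * (X - 1) ^ (N - 1) with hQdef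
  have hP : ∀ y : ℂ, P.eval y = (y • (1 : Matrix (Fin (2 * N + 1)) (Fin (2 * N + 1)) ℂ)
      - friendshipAdj N).det := by
    intro y
    rw [hPdef, show ∀ p : Polynomial ℂ, p.eval y = (evalRingHom y) p from fun _ => rfl,
      RingHom.map_det]
    congr 1
    ext i j
    simp [Matrix.map_apply, Matrix.sub_apply, Matrix.smul_apply, Matrix.one_apply, apply_ite
      (eval y), smul_eq_mul]
  have hQ : ∀ y : ℂ, Q.eval y = (y ^ 2 - y - 2 * N) * (y + 1) ^ N * (y - 1) ^ (N - 1) := by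
    intro y; simp [hQdef]
  have hPQ : P = Q := by
    apply Polynomial.eq_of_infinite_eval_eq
    have hfin : ({1, -1} : Set ℂ).Finite := (Set.finite_singleton (-1 : ℂ)).insert 1
    apply hfin.infinite_compl.mono
    intro y hy
    simp only [Set.mem_compl_iff, Set.mem_insert_iff, Set.mem_singleton_iff, not_or] at hy
    show P.eval y = Q.eval y
    rw [hP, hQ]
    exact FriendAux.det_eq N hN y hy.1 hy.2
  have hs : ((Real.sqrt (1 + 8 * N) : ℝ) : ℂ) ^ 2 = 1 + 8 * N := by
    rw [← Complex.ofReal_pow, Real.sq_sqrt (by positivity)]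
    push_cast; ring
  have hfac : (x - ((1 + Real.sqrt (1 + 8 * N)) / 2 : ℝ))
      * (x - ((1 - Real.sqrt (1 + 8 * N)) / 2 : ℝ)) = x ^ 2 - x - 2 * N := by
    push_cast
    linear_combination (-(1 : ℂ) / 4) * hs
  rw [← hP x, hPQ, hQ, ← hfac]
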